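/- Let d ≥ 2 be an integer and let a, v_1, v_2, s be positive real numbers satisfying: (i) s · v_2^{1/(d−1)} ≤ a^{1/(d−1)}; (ii) a^{d/(d−1)} − v_1 · v_2^{1/(d−1)} ≥ (a^{1/(d−1)} − s · v_2^{1/(d−1)})^d; and (iii) a^d = v_1^{d−1} · v_2. Then a = s^{d−1} · v_2 and v_1 = s^d · v_2. -/

import Mathlib

open Real

theorem stmt_10 (d : ℕ) (hd : 2 ≤ d) (a v1 v2 s : ℝ)
    (ha : 0 < a) (hv1 : 0 < v1) (hv2 : 0 < v2) (hs : 0 < s)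
    (hi : s * v2 ^ ((1 : ℝ) / (d - 1)) ≤ a ^ ((1 : ℝ) / (d - 1)))
    (hDiskant : a ^ ((d : ℝ) / (d - 1)) - v1 * v2 ^ ((1 : ℝ) / (d - 1)) ≥
      (a ^ ((1 : ℝ) / (d - 1)) - s * v2 ^ ((1 : ℝ) / (d - 1))) ^ d)
    (heq : a ^ d = v1 ^ (d - 1) * v2) :
    a = s ^ (d - 1) * v2 ∧ v1 = s ^ d * v2 := by
  have hd1 : (1:ℕ) ≤ d := by omega
  have hdc : ((d - 1 : ℕ) : ℝ) = (d : ℝ) - 1 := by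
    push_cast [Nat.cast_sub hd1]; ring
  have hpos : (0:ℝ) < (d : ℝ) - 1 := by
    have : (2:ℝ) ≤ d := by exact_mod_cast hd
    linarith
  -- key: a ^ (d/(d-1)) = v1 * v2^(1/(d-1))
  have key : a ^ ((d:ℝ) / (d - 1)) = v1 * v2 ^ ((1:ℝ) / (d - 1)) := by
    have h1 : a ^ ((d:ℝ) / (d - 1)) = ((a ^ d : ℝ)) ^ ((1:ℝ) / (d - 1)) := by
      rw [← rpow_natCast a d, ← rpow_mul ha.le]
      congr 1; field_simp
    rw [h1, heq, mul_rpow (by positivity) hv2.le, ← rpow_natCast v1 (d-1),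
      ← rpow_mul hv1.le, hdc]
    rw [mul_one_div, div_self hpos.ne', rpow_one]
  have hx0 : a ^ ((1:ℝ) / (d - 1)) - s * v2 ^ ((1:ℝ) / (d - 1)) = 0 := by
    have hle : (a ^ ((1:ℝ) / (d - 1)) - s * v2 ^ ((1:ℝ) / (d - 1))) ^ d ≤ 0 := by
      rw [key] at hDiskant; linarith
    have hge : 0 ≤ (a ^ ((1:ℝ) / (d - 1)) - s * v2 ^ ((1:ℝ) / (d - 1))) ^ d :=
      pow_nonneg (by linarith) d
    exact pow_eq_zero_iff (by omega) |>.mp (le_antisymm hle hge)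
  have hroot : a ^ ((1:ℝ) / (d - 1)) = s * v2 ^ ((1:ℝ) / (d - 1)) := by linarith
  have hA : a = s ^ (d - 1) * v2 := by
    have h := congrArg (fun x => x ^ ((d:ℝ) - 1)) hroot
    rw [← rpow_mul ha.le, mul_rpow hs.le (by positivity), ← rpow_mul hv2.le,
      one_div, inv_mul_cancel₀ hpos.ne', rpow_one, ← hdc, rpow_natCast] at h
    simpa using h
  refine ⟨hA, ?_⟩
  obtain ⟨n, rfl⟩ : ∃ n, d = n + 1 := ⟨d - 1, by omega⟩
  simp only [Nat.add_sub_cancel] at hA heq ⊢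
  have h2 : v1 ^ n = (s ^ (n + 1) * v2) ^ n := by
    have h3 : v1 ^ n * v2 = (s ^ (n + 1) * v2) ^ n * v2 := by
      rw [← heq, hA]; ring
    exact mul_right_cancel₀ hv2.ne' h3
  exact pow_left_inj₀ hv1.le (by positivity) (by omega) |>.mp h2
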